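/- Let $\{\lambda_i\} \in \ell_1$ and let $f_i = f(\mathbf{n}_i)$ for functions $\mathbf{n}_i \in \mathbf{D}$ (the special $\ell_2$-valued basic functions). Then $f = \sum_{i=1}^{\infty} \lambda_i f_i$ is Pettis integrable, and for every $\tau \in \{0,1\}^{<\infty}$, $\|\int_{I_\tau} f_{|\tau}\| \le \sum_{i=1}^{\infty} |\lambda_i| \, \|\int_{I_\tau} f_{i|\tau}\|$. -/

import Mathlib

open MeasureTheory
open scoped Classical

noncomputable section

/-- The Hilbert space `ℓ₂` of square-summable real sequences. -/
abbrev H2 : Type := lp (fun _ : ℕ => ℝ) 2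

/-- The index set `B = {(σ,i) : σ ∈ {0,1}^{<∞}, 0 ≤ i ≤ |σ|}`. -/
def Bidx : Type := Σ σ : List Bool, Fin (σ.length + 1)

/-- Left endpoint of the dyadic interval `I_σ`. -/
noncomputable def dyadicLeft (σ : List Bool) : ℝ :=
  ∑ i ∈ Finset.range σ.length, if σ.getD i false then (2:ℝ)⁻¹ ^ (i+1) else 0

/-- The dyadic interval `I_σ ⊆ [0,1]` of length `2^{-|σ|}`: `I_∅ = [0,1]`,
`I_{σ0}` is the left half and `I_{σ1}` the right half of `I_σ`. -/
noncomputable def dyadicInterval (σ : List Bool) : Set ℝ :=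
  Set.Icc (dyadicLeft σ) (dyadicLeft σ + (2:ℝ)⁻¹ ^ σ.length)

/-- `f` is Pettis integrable with respect to `μ`: every continuous functional composed with
`f` is integrable, and over each measurable set there is a vector representing the integrals. -/
def PettisIntegrable {X : Type} [NormedAddCommGroup X] [NormedSpace ℝ X]
    (f : ℝ → X) (μ : MeasureTheory.Measure ℝ) : Prop :=
  (∀ φ : X →L[ℝ] ℝ, MeasureTheory.Integrable (fun t => φ (f t)) μ) ∧
  ∀ E : Set ℝ, MeasurableSet E → ∃ v : X, ∀ φ : X →L[ℝ] ℝ, φ v = ∫ t in E, φ (f t) ∂μ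

/-- `v` is the Pettis integral of `f` over the set `E` (w.r.t. `μ`). -/
def IsPettisIntegralOn {X : Type} [NormedAddCommGroup X] [NormedSpace ℝ X]
    (f : ℝ → X) (μ : MeasureTheory.Measure ℝ) (E : Set ℝ) (v : X) : Prop :=
  ∀ φ : X →L[ℝ] ℝ, φ v = ∫ t in E, φ (f t) ∂μ

/-- The basic function `f = ∑_{(σ,i) ∈ B} c(σ,i) (1/λ(A(σ,i))) e(σ,i) χ_{A(σ,i)}`. -/
noncomputable def basicFun {X : Type} [NormedAddCommGroup X] [NormedSpace ℝ X]
    (c : Bidx → ℝ) (A : Bidx → Set ℝ) (e : Bidx → X) : ℝ → X :=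
  fun t => ∑' p : Bidx,
    Set.indicator (A p) (fun _ => ((MeasureTheory.volume (A p)).toReal)⁻¹ • (c p • e p)) t

/-- The restriction `f_{|τ}`: the subseries of the basic function over indices `(σ,i)`
with `σ` an extension of `τ`. -/
noncomputable def basicFunRes {X : Type} [NormedAddCommGroup X] [NormedSpace ℝ X]
    (τ : List Bool) (c : Bidx → ℝ) (A : Bidx → Set ℝ) (e : Bidx → X) : ℝ → X :=
  basicFun (fun p => if τ <+: p.1 then c p else 0) A e

/-- Coefficients of the special basic function `f(𝐧)`: the coefficient of `(σ, i)` is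
`1/((k+1)2^{k/2})` when `|σ| = k` and `i = 𝐧(k)`, and `0` otherwise. -/
noncomputable def specialCoef (n : ℕ → ℕ) : Bidx → ℝ := fun p =>
  if (p.2 : ℕ) = n p.1.length then
    (((p.1.length : ℝ) + 1) * (2:ℝ) ^ ((p.1.length : ℝ) / 2))⁻¹
  else 0


set_option synthInstance.maxHeartbeats 1000000 in
instance : T2Space H2 := inferInstance

noncomputable def lvlL (k : ℕ) : Finset (List Bool) :=
  (Finset.univ : Finset (Fin k → Bool)).image List.ofFn

lemma mem_lvlL {k : ℕ} {σ : List Bool} : σ ∈ lvlL k ↔ σ.length = k := by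
  constructor
  · intro h; obtain ⟨f, -, rfl⟩ := Finset.mem_image.1 h; simp
  · rintro rfl; exact Finset.mem_image.2 ⟨σ.get, Finset.mem_univ _, List.ofFn_get σ⟩

lemma card_lvlL (k : ℕ) : (lvlL k).card = 2^k := by
  rw [lvlL, Finset.card_image_of_injective _ List.ofFn_injective]
  simp

noncomputable def lvl (k : ℕ) : Finset Bidx :=
  (lvlL k).sigma (fun σ => (Finset.univ : Finset (Fin (σ.length+1))))

lemma mem_lvl {k : ℕ} {p : Bidx} : p ∈ lvl k ↔ p.1.length = k := by
  cases p; exact Finset.mem_sigma.trans (by simp [mem_lvlL])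

lemma sum_le_of_level {F : Bidx → ℝ} (hF : ∀ p, 0 ≤ F p) {b : ℕ → ℝ}
    (hb : ∀ k, ∑ p ∈ lvl k, F p ≤ b k) (hb0 : ∀ k, 0 ≤ b k) (hbs : Summable b)
    (s : Finset Bidx) : ∑ p ∈ s, F p ≤ ∑' k, b k := by
  set N := s.sup (fun p => p.1.length) with hN
  have hsub : s ⊆ (Finset.range (N+1)).biUnion lvl := by
    intro p hp
    exact Finset.mem_biUnion.2 ⟨p.1.length,
      Finset.mem_range.2 (Nat.lt_succ_of_le (Finset.le_sup (f := fun p : Bidx => p.1.length) hp)), mem_lvl.2 rfl⟩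
  have hdisj : ∀ k ∈ (Finset.range (N+1) : Finset ℕ), ∀ k' ∈ (Finset.range (N+1) : Finset ℕ),
      k ≠ k' → Disjoint (lvl k) (lvl k') := by
    intro k _ k' _ h
    refine Finset.disjoint_left.2 fun p hp hp' => h ?_
    rw [← mem_lvl.1 hp, mem_lvl.1 hp']
  calc ∑ p ∈ s, F p ≤ ∑ p ∈ (Finset.range (N+1)).biUnion lvl, F p :=
        Finset.sum_le_sum_of_subset_of_nonneg hsub (fun p _ _ => hF p)
    _ = ∑ k ∈ Finset.range (N+1), ∑ p ∈ lvl k, F p := Finset.sum_biUnion hdisj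
    _ ≤ ∑ k ∈ Finset.range (N+1), b k := Finset.sum_le_sum fun k _ => hb k
    _ ≤ ∑' k, b k := Summable.sum_le_tsum _ (fun k _ => hb0 k) hbs

lemma summable_of_level {F : Bidx → ℝ} (hF : ∀ p, 0 ≤ F p) {b : ℕ → ℝ}
    (hb : ∀ k, ∑ p ∈ lvl k, F p ≤ b k) (hb0 : ∀ k, 0 ≤ b k) (hbs : Summable b) :
    Summable F ∧ ∑' p, F p ≤ ∑' k, b k :=
  ⟨summable_of_sum_le hF (sum_le_of_level hF hb hb0 hbs),
   Summable.tsum_le_of_sum_le (summable_of_sum_le hF (sum_le_of_level hF hb hb0 hbs))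
     (sum_le_of_level hF hb hb0 hbs)⟩

noncomputable def SKs : ℕ → ℝ := fun k => Real.sqrt ((k:ℝ)+1) / ((k:ℝ)+1)^2

lemma SKs_eq (k : ℕ) : SKs k = ((k:ℝ)+1) ^ (-(3/2) : ℝ) := by
  have hx : (0:ℝ) < (k:ℝ)+1 := by positivity
  rw [SKs, show (-(3/2) : ℝ) = 1/2 + (-2 : ℝ) by norm_num, Real.rpow_add hx,
    ← Real.sqrt_eq_rpow, Real.rpow_neg hx.le, div_eq_mul_inv]
  norm_num [Real.rpow_two]

lemma summable_SKs : Summable SKs := by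
  have h : Summable (fun n : ℕ => (n:ℝ) ^ (-(3/2) : ℝ)) :=
    Real.summable_nat_rpow.mpr (by norm_num)
  have h2 := (summable_nat_add_iff 1).2 h
  refine h2.congr fun k => ?_
  rw [SKs_eq]; push_cast; ring_nf

noncomputable def SK : ℝ := ∑' k, SKs k

lemma SKs_nonneg (k : ℕ) : 0 ≤ SKs k := by unfold SKs; positivity

lemma SK_nonneg : 0 ≤ SK := tsum_nonneg SKs_nonneg

lemma one_le_weight (k : ℕ) : 1 ≤ Real.sqrt ((k:ℝ)+1) := by
  have := Real.sqrt_le_sqrt (show (1:ℝ) ≤ (k:ℝ)+1 by linarith [Nat.cast_nonneg (α := ℝ) k])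
  simpa using this




lemma unique_p (A : Bidx → Set ℝ) (hdisj : ∀ p q : Bidx, p ≠ q → Disjoint (A p) (A q))
    {t : ℝ} {p q : Bidx} (hp : t ∈ A p) (hq : t ∈ A q) : p = q := by
  by_contra h
  exact (Set.disjoint_left.1 (hdisj p q h)) hp hq

lemma summable_support (A : Bidx → Set ℝ) (hdisj : ∀ p q : Bidx, p ≠ q → Disjoint (A p) (A q))
    {M : Type} [AddCommMonoid M] [TopologicalSpace M]
    (t : ℝ) (G : Bidx → M) (hG : ∀ p, t ∉ A p → G p = 0) : Summable G := by
  rcases em (∃ p, t ∈ A p) with ⟨p₀, hp₀⟩ | h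
  · refine summable_of_ne_finset_zero (s := {p₀}) (fun p hp => hG p (fun ht => hp ?_))
    simp [unique_p A hdisj ht hp₀]
  · exact summable_of_ne_finset_zero (s := ∅) (fun p _ => hG p (fun ht => h ⟨p, ht⟩))

lemma tsum_support_mem (A : Bidx → Set ℝ) (hdisj : ∀ p q : Bidx, p ≠ q → Disjoint (A p) (A q))
    {M : Type} [AddCommMonoid M] [TopologicalSpace M] [T2Space M] {t : ℝ} {p₀ : Bidx}
    (hp₀ : t ∈ A p₀) (G : Bidx → M) (hG : ∀ p, t ∉ A p → G p = 0) : ∑' p, G p = G p₀ :=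
  tsum_eq_single p₀ (fun p hp => hG p fun ht => hp (unique_p A hdisj ht hp₀))

lemma tsum_support_none {M : Type} [AddCommMonoid M] [TopologicalSpace M]
    (A : Bidx → Set ℝ) {t : ℝ} (G : Bidx → M) (hG : ∀ p, t ∉ A p → G p = 0)
    (h : ∀ p, t ∉ A p) : ∑' p, G p = 0 := by
  have hz : G = fun _ => 0 := funext fun p => hG p (h p)
  rw [hz]; exact tsum_zero

lemma basicFun_eval_mem (A : Bidx → Set ℝ) (e : Bidx → H2)
    (hdisj : ∀ p q : Bidx, p ≠ q → Disjoint (A p) (A q)) (c : Bidx → ℝ) {t : ℝ} {p₀ : Bidx}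
    (hp₀ : t ∈ A p₀) :
    basicFun c A e t = ((volume (A p₀)).toReal)⁻¹ • (c p₀ • e p₀) := by
  rw [basicFun, tsum_support_mem A hdisj hp₀ _ (fun p hp => Set.indicator_of_notMem hp _),
    Set.indicator_of_mem hp₀]

lemma basicFun_eval_none (A : Bidx → Set ℝ) (e : Bidx → H2) (c : Bidx → ℝ) {t : ℝ}
    (h : ∀ p, t ∉ A p) : basicFun c A e t = 0 := by
  rw [basicFun]
  exact tsum_support_none A _ (fun p hp => Set.indicator_of_notMem hp _) h

lemma phi_basicFun (A : Bidx → Set ℝ) (e : Bidx → H2)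
    (hdisj : ∀ p q : Bidx, p ≠ q → Disjoint (A p) (A q)) (c : Bidx → ℝ)
    (φ : H2 →L[ℝ] ℝ) (t : ℝ) :
    φ (basicFun c A e t)
      = ∑' p, Set.indicator (A p)
          (fun _ => ((volume (A p)).toReal)⁻¹ * (c p * φ (e p))) t := by
  rcases em (∃ p, t ∈ A p) with ⟨p₀, hp₀⟩ | h
  · rw [basicFun_eval_mem A e hdisj c hp₀,
      tsum_support_mem A hdisj hp₀ _ (fun p hp => Set.indicator_of_notMem hp _),
      Set.indicator_of_mem hp₀]
    simp
  · rw [basicFun_eval_none A e c (fun p => fun ht => h ⟨p, ht⟩),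
      tsum_support_none A _ (fun p hp => Set.indicator_of_notMem hp _)
        (fun p => fun ht => h ⟨p, ht⟩)]
    simp

instance : Countable Bidx := by unfold Bidx; infer_instance

instance : Infinite Bidx :=
  Infinite.of_injective (fun n : ℕ => (⟨List.replicate n true, 0⟩ : Bidx))
    (by intro a b h; simpa [List.replicate] using congrArg (fun p : Bidx => p.1.length) h)

lemma measurable_tsum' {G : Bidx → ℝ → ℝ} (hG : ∀ p, Measurable (G p))
    (hs : ∀ t, Summable (fun p => G p t)) : Measurable (fun t => ∑' p, G p t) := by
  haveI : Denumerable Bidx := (nonempty_denumerable_iff.mpr ⟨inferInstance, inferInstance⟩).some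
  let eqv := Denumerable.eqv Bidx
  have heq : (fun t => ∑' p, G p t) = fun t => ∑' n : ℕ, G (eqv.symm n) t := by
    funext t
    exact (Equiv.tsum_eq eqv.symm (fun p => G p t)).symm
  rw [heq]
  have hmeas : ∀ n : ℕ, Measurable (fun t => ∑ i ∈ Finset.range n, G (eqv.symm i) t) :=
    fun n => Finset.measurable_sum _ (fun i _ => hG _)
  refine measurable_of_tendsto_metrizable hmeas ?_
  rw [tendsto_pi_nhds]
  intro t
  exact ((hs t).comp_injective eqv.symm.injective).hasSum.tendsto_sum_nat

open scoped RealInnerProductSpace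

lemma geom_half (n : ℕ) : ∑ i ∈ Finset.range n, ((2:ℝ)⁻¹)^(i+1) = 1 - (2⁻¹:ℝ)^n := by
  induction n with
  | zero => simp
  | succ n ih => rw [Finset.sum_range_succ, ih, pow_succ]; ring

lemma dyadic_subset (σ : List Bool) : dyadicInterval σ ⊆ Set.Icc 0 1 := by
  intro x hx
  obtain ⟨h1, h2⟩ := hx
  have hL0 : 0 ≤ dyadicLeft σ := by
    refine Finset.sum_nonneg (fun i _ => ?_)
    split <;> positivity
  have hle : dyadicLeft σ ≤ ∑ i ∈ Finset.range σ.length, ((2:ℝ)⁻¹)^(i+1) := by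
    refine Finset.sum_le_sum (fun i _ => ?_)
    split
    · exact le_rfl
    · positivity
  rw [geom_half] at hle
  exact ⟨le_trans hL0 h1, le_trans h2 (by linarith)⟩

lemma vol_A_lt_top (A : Bidx → Set ℝ) (hAs : ∀ p : Bidx, A p ⊆ dyadicInterval p.1) (p : Bidx) :
    volume (A p) < ⊤ :=
  lt_of_le_of_lt (measure_mono ((hAs p).trans (dyadic_subset _)))
    (by rw [Real.volume_Icc]; exact ENNReal.ofReal_lt_top)

lemma vol_toReal_pos (A : Bidx → Set ℝ) (hAs : ∀ p : Bidx, A p ⊆ dyadicInterval p.1)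
    (hApos : ∀ p, 0 < volume (A p)) (p : Bidx) : 0 < (volume (A p)).toReal :=
  ENNReal.toReal_pos (hApos p).ne' (vol_A_lt_top A hAs p).ne

lemma bessel (e : Bidx → H2) (he : Orthonormal ℝ e) (φ : H2 →L[ℝ] ℝ) (s : Finset Bidx) :
    ∑ p ∈ s, (φ (e p))^2 ≤ ‖φ‖^2 := by
  set y := (InnerProductSpace.toDual ℝ H2).symm φ with hy
  have hfe : ∀ x : H2, ⟪y, x⟫ = φ x := fun x => InnerProductSpace.toDual_symm_apply
  have h1 : ∑ p ∈ s, (φ (e p))^2 = ∑ p ∈ s, ‖⟪e p, y⟫‖^2 := by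
    refine Finset.sum_congr rfl (fun p _ => ?_)
    rw [real_inner_comm, hfe, Real.norm_eq_abs, sq_abs]
  rw [h1]
  have h2 := he.sum_inner_products_le (𝕜 := ℝ) (s := s) y
  have h3 : ‖y‖ = ‖φ‖ := LinearIsometryEquiv.norm_map _ φ
  rw [h3] at h2
  exact h2

lemma key_estimate (e : Bidx → H2) (he : Orthonormal ℝ e) {c : Bidx → ℝ} {M : ℝ} (hM : 0 ≤ M)
    (hc : ∀ k, ∑ p ∈ lvl k, (c p)^2 ≤ M^2/((k:ℝ)+1)^2) (φ : H2 →L[ℝ] ℝ) (s : Finset Bidx) :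
    ∑ p ∈ s, |c p| * |φ (e p)| ≤ M * Real.sqrt SK * ‖φ‖ := by
  set w : Bidx → ℝ := fun p => Real.sqrt ((p.1.length : ℝ)+1) with hw
  have hw1 : ∀ p, 1 ≤ w p := fun p => one_le_weight _
  have hw0 : ∀ p, 0 < w p := fun p => lt_of_lt_of_le one_pos (hw1 p)
  set f : Bidx → ℝ := fun p => |c p| * Real.sqrt (w p) with hf
  set g : Bidx → ℝ := fun p => |φ (e p)| / Real.sqrt (w p) with hg
  have hfg : ∀ p, f p * g p = |c p| * |φ (e p)| := by
    intro p
    have : Real.sqrt (w p) ≠ 0 := by positivity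
    show |c p| * Real.sqrt (w p) * (|φ (e p)| / Real.sqrt (w p)) = |c p| * |φ (e p)|
    rw [mul_assoc, ← mul_div_assoc, mul_comm (Real.sqrt (w p)), mul_div_assoc, div_self this, mul_one]
  have hf2 : ∀ p, (f p)^2 = (c p)^2 * w p := by
    intro p
    rw [hf, mul_pow, sq_abs, Real.sq_sqrt (hw0 p).le]
  have hg2 : ∀ p, (g p)^2 = (φ (e p))^2 / w p := by
    intro p
    rw [hg, div_pow, sq_abs, Real.sq_sqrt (hw0 p).le]
  have hsumf : ∑ p ∈ s, (f p)^2 ≤ M^2 * SK := by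
    have hlev : ∀ k, ∑ p ∈ lvl k, (c p)^2 * w p ≤ M^2 * SKs k := by
      intro k
      have hcong : ∑ p ∈ lvl k, (c p)^2 * w p
          = ∑ p ∈ lvl k, (c p)^2 * Real.sqrt ((k:ℝ)+1) := by
        refine Finset.sum_congr rfl (fun p hp => ?_)
        simp only [hw]
        rw [mem_lvl.1 hp]
      rw [hcong, ← Finset.sum_mul]
      have := mul_le_mul_of_nonneg_right (hc k) (Real.sqrt_nonneg ((k:ℝ)+1))
      refine this.trans (le_of_eq ?_)
      rw [SKs]
      ring
    have := sum_le_of_level (F := fun p => (c p)^2 * w p)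
      (fun p => mul_nonneg (sq_nonneg _) (hw0 p).le) hlev
      (fun k => mul_nonneg (sq_nonneg _) (SKs_nonneg k))
      ((summable_SKs.mul_left (M^2)))
      s
    calc ∑ p ∈ s, (f p)^2 = ∑ p ∈ s, (c p)^2 * w p :=
          Finset.sum_congr rfl (fun p _ => hf2 p)
      _ ≤ ∑' k, M^2 * SKs k := this
      _ = M^2 * SK := by rw [tsum_mul_left]; rfl
  have hsumg : ∑ p ∈ s, (g p)^2 ≤ ‖φ‖^2 := by
    calc ∑ p ∈ s, (g p)^2 ≤ ∑ p ∈ s, (φ (e p))^2 := by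
          refine Finset.sum_le_sum (fun p _ => ?_)
          rw [hg2 p]
          exact div_le_self (sq_nonneg _) (hw1 p)
      _ ≤ ‖φ‖^2 := bessel e he φ s
  have hCS := Finset.sum_mul_sq_le_sq_mul_sq s f g
  have hb : (0:ℝ) ≤ M * Real.sqrt SK * ‖φ‖ := by positivity
  have hsq : (∑ p ∈ s, f p * g p)^2 ≤ (M * Real.sqrt SK * ‖φ‖)^2 := by
    refine hCS.trans ?_
    have h1 : (M * Real.sqrt SK * ‖φ‖)^2 = (M^2 * SK) * ‖φ‖^2 := by
      rw [mul_pow, mul_pow, Real.sq_sqrt SK_nonneg]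
    rw [h1]
    have hfnn : (0:ℝ) ≤ ∑ p ∈ s, (f p)^2 := Finset.sum_nonneg (fun p _ => sq_nonneg _)
    exact mul_le_mul hsumf hsumg (Finset.sum_nonneg (fun p _ => sq_nonneg _))
      (mul_nonneg (sq_nonneg M) SK_nonneg)
  have hnn : 0 ≤ ∑ p ∈ s, f p * g p :=
    Finset.sum_nonneg (fun p _ => by rw [hfg]; positivity)
  have := Real.sqrt_le_sqrt hsq
  rw [Real.sqrt_sq hnn, Real.sqrt_sq hb] at this
  calc ∑ p ∈ s, |c p| * |φ (e p)| = ∑ p ∈ s, f p * g p :=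
        Finset.sum_congr rfl (fun p _ => (hfg p).symm)
    _ ≤ M * Real.sqrt SK * ‖φ‖ := this

lemma frac_le_one (A : Bidx → Set ℝ) (hAs : ∀ p : Bidx, A p ⊆ dyadicInterval p.1)
    (hApos : ∀ p, 0 < volume (A p)) (p : Bidx) (S : Set ℝ) :
    ((volume (A p)).toReal)⁻¹ * (volume (A p ∩ S)).toReal ≤ 1 := by
  have hpos := vol_toReal_pos A hAs hApos p
  have hle : (volume (A p ∩ S)).toReal ≤ (volume (A p)).toReal :=
    ENNReal.toReal_mono (vol_A_lt_top A hAs p).ne (measure_mono Set.inter_subset_left)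
  rw [inv_mul_eq_div]
  exact (div_le_one hpos).2 hle

lemma frac_nonneg (A : Bidx → Set ℝ) (p : Bidx) (S : Set ℝ) :
    0 ≤ ((volume (A p)).toReal)⁻¹ * (volume (A p ∩ S)).toReal := by positivity

lemma lint_T (A : Bidx → Set ℝ) (hAc : ∀ p, IsClosed (A p)) (p : Bidx) (r : ℝ)
    (S : Set ℝ) :
    ∫⁻ t, ‖Set.indicator (A p) (fun _ => ((volume (A p)).toReal)⁻¹ * r) t‖₊
        ∂(volume.restrict S)
      = ENNReal.ofReal (((volume (A p)).toReal)⁻¹ * |r|) * volume.restrict S (A p) := by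
  have hind : (fun t => (‖Set.indicator (A p) (fun _ => ((volume (A p)).toReal)⁻¹ * r) t‖₊ : ENNReal))
      = (A p).indicator (fun _ => ENNReal.ofReal (((volume (A p)).toReal)⁻¹ * |r|)) := by
    funext t
    by_cases ht : t ∈ A p
    · rw [Set.indicator_of_mem ht, Set.indicator_of_mem ht, ← enorm_eq_nnnorm, Real.enorm_eq_ofReal_abs,
        abs_mul, abs_of_nonneg (by positivity : (0:ℝ) ≤ ((volume (A p)).toReal)⁻¹)]
    · rw [Set.indicator_of_notMem ht, Set.indicator_of_notMem ht]
      simp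
  rw [hind, lintegral_indicator_const (hAc p).measurableSet]

lemma lint_T_le (A : Bidx → Set ℝ) (hAc : ∀ p, IsClosed (A p))
    (hAs : ∀ p : Bidx, A p ⊆ dyadicInterval p.1) (hApos : ∀ p, 0 < volume (A p))
    (p : Bidx) (r : ℝ) {S : Set ℝ} (hS : MeasurableSet S) :
    ∫⁻ t, ‖Set.indicator (A p) (fun _ => ((volume (A p)).toReal)⁻¹ * r) t‖₊
        ∂(volume.restrict S)
      ≤ ENNReal.ofReal |r| := by
  rw [lint_T A hAc p r S, Measure.restrict_apply (hAc p).measurableSet]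
  have hfin : volume (A p ∩ S) ≠ ⊤ :=
    (lt_of_le_of_lt (measure_mono Set.inter_subset_left) (vol_A_lt_top A hAs p)).ne
  rw [← ENNReal.ofReal_toReal hfin, ← ENNReal.ofReal_mul (by positivity)]
  refine ENNReal.ofReal_le_ofReal ?_
  have := frac_le_one A hAs hApos p S
  calc ((volume (A p)).toReal)⁻¹ * |r| * (volume (A p ∩ S)).toReal
      = |r| * (((volume (A p)).toReal)⁻¹ * (volume (A p ∩ S)).toReal) := by ring
    _ ≤ |r| * 1 := by
        exact mul_le_mul_of_nonneg_left this (abs_nonneg r)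
    _ = |r| := mul_one _

lemma phi_summable (e : Bidx → H2) (he : Orthonormal ℝ e) {c : Bidx → ℝ} {M : ℝ} (hM : 0 ≤ M)
    (hc : ∀ k, ∑ p ∈ lvl k, (c p)^2 ≤ M^2/((k:ℝ)+1)^2) (φ : H2 →L[ℝ] ℝ) :
    Summable (fun p => |c p| * |φ (e p)|) ∧
      ∑' p, |c p| * |φ (e p)| ≤ M * Real.sqrt SK * ‖φ‖ := by
  have h1 : Summable (fun p => |c p| * |φ (e p)|) :=
    summable_of_sum_le (fun p => by positivity) (key_estimate e he hM hc φ)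
  exact ⟨h1, Summable.tsum_le_of_sum_le h1 (key_estimate e he hM hc φ)⟩

lemma csq_summable {c : Bidx → ℝ} {M : ℝ}
    (hc : ∀ k, ∑ p ∈ lvl k, (c p)^2 ≤ M^2/((k:ℝ)+1)^2) :
    Summable (fun p => (c p)^2) ∧ ∑' p, (c p)^2 ≤ M^2 * SK := by
  have hlev : ∀ k, ∑ p ∈ lvl k, (c p)^2 ≤ M^2 * SKs k := by
    intro k
    refine (hc k).trans ?_
    rw [SKs, div_eq_mul_inv, div_eq_mul_inv]
    have h1 : ((((k:ℝ)+1)^2)⁻¹ : ℝ) ≤ Real.sqrt ((k:ℝ)+1) * (((k:ℝ)+1)^2)⁻¹ := by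
      nlinarith [one_le_weight k, inv_nonneg.2 (sq_nonneg ((k:ℝ)+1))]
    nlinarith [sq_nonneg M, inv_nonneg.2 (sq_nonneg ((k:ℝ)+1)), one_le_weight k,
      Real.sqrt_nonneg ((k:ℝ)+1)]
  have h := summable_of_level (fun p => sq_nonneg _) hlev
    (fun k => mul_nonneg (sq_nonneg M) (SKs_nonneg k)) (summable_SKs.mul_left _)
  refine ⟨h.1, h.2.trans (le_of_eq ?_)⟩
  rw [tsum_mul_left, SK]

lemma T_summable_pt (A : Bidx → Set ℝ) (hdisj : ∀ p q : Bidx, p ≠ q → Disjoint (A p) (A q))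
    (b : Bidx → ℝ) (t : ℝ) :
    Summable (fun p => Set.indicator (A p) (fun _ => b p) t) :=
  summable_support A hdisj t _ (fun p hp => Set.indicator_of_notMem hp _)

lemma T_measurable (A : Bidx → Set ℝ) (hAc : ∀ p, IsClosed (A p))
    (hdisj : ∀ p q : Bidx, p ≠ q → Disjoint (A p) (A q)) (b : Bidx → ℝ) :
    Measurable (fun t => ∑' p, Set.indicator (A p) (fun _ => b p) t) :=
  measurable_tsum' (fun p => measurable_const.indicator (hAc p).measurableSet)
    (fun t => T_summable_pt A hdisj b t)

lemma nnnorm_tsum_pt (A : Bidx → Set ℝ) (hdisj : ∀ p q : Bidx, p ≠ q → Disjoint (A p) (A q))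
    (b : Bidx → ℝ) (t : ℝ) :
    (‖∑' p, Set.indicator (A p) (fun _ => b p) t‖₊ : ENNReal)
      ≤ ∑' p, (‖Set.indicator (A p) (fun _ => b p) t‖₊ : ENNReal) := by
  rcases em (∃ p, t ∈ A p) with ⟨p₀, hp₀⟩ | h
  · rw [tsum_support_mem A hdisj hp₀ _ (fun p hp => Set.indicator_of_notMem hp _)]
    exact ENNReal.le_tsum p₀
  · rw [tsum_support_none A _ (fun p hp => Set.indicator_of_notMem hp _)
      (fun p ht => h ⟨p, ht⟩)]
    simp

lemma lint_phi_le (A : Bidx → Set ℝ) (hAc : ∀ p, IsClosed (A p))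
    (hAs : ∀ p : Bidx, A p ⊆ dyadicInterval p.1) (hApos : ∀ p, 0 < volume (A p))
    (hdisj : ∀ p q : Bidx, p ≠ q → Disjoint (A p) (A q))
    (e : Bidx → H2) (he : Orthonormal ℝ e) {c : Bidx → ℝ} {M : ℝ} (hM : 0 ≤ M)
    (hc : ∀ k, ∑ p ∈ lvl k, (c p)^2 ≤ M^2/((k:ℝ)+1)^2) (φ : H2 →L[ℝ] ℝ)
    {S : Set ℝ} (hS : MeasurableSet S) :
    ∫⁻ t, ‖φ (basicFun c A e t)‖₊ ∂(volume.restrict S)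
      ≤ ENNReal.ofReal (M * Real.sqrt SK * ‖φ‖) := by
  have heval : ∀ t, φ (basicFun c A e t)
      = ∑' p, Set.indicator (A p)
          (fun _ => ((volume (A p)).toReal)⁻¹ * (c p * φ (e p))) t :=
    phi_basicFun A e hdisj c φ
  calc ∫⁻ t, ‖φ (basicFun c A e t)‖₊ ∂(volume.restrict S)
      ≤ ∫⁻ t, ∑' p, (‖Set.indicator (A p)
          (fun _ => ((volume (A p)).toReal)⁻¹ * (c p * φ (e p))) t‖₊ : ENNReal)
          ∂(volume.restrict S) := by
        refine lintegral_mono (fun t => ?_)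
        rw [heval t]
        exact nnnorm_tsum_pt A hdisj _ t
    _ = ∑' p, ∫⁻ t, (‖Set.indicator (A p)
          (fun _ => ((volume (A p)).toReal)⁻¹ * (c p * φ (e p))) t‖₊ : ENNReal)
          ∂(volume.restrict S) :=
        lintegral_tsum (fun p =>
          ((measurable_const.indicator (hAc p).measurableSet).nnnorm.coe_nnreal_ennreal).aemeasurable)
    _ ≤ ∑' p, ENNReal.ofReal (|c p * φ (e p)|) :=
        ENNReal.tsum_le_tsum (fun p => lint_T_le A hAc hAs hApos p _ hS)
    _ ≤ ENNReal.ofReal (M * Real.sqrt SK * ‖φ‖) := by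
        have hsum := phi_summable e he hM hc φ
        have habs : ∀ p : Bidx, |c p * φ (e p)| = |c p| * |φ (e p)| := fun p => abs_mul _ _
        calc ∑' p, ENNReal.ofReal (|c p * φ (e p)|)
            = ∑' p, ENNReal.ofReal (|c p| * |φ (e p)|) := by
              exact tsum_congr (fun p => by rw [habs p])
          _ = ENNReal.ofReal (∑' p, |c p| * |φ (e p)|) :=
              (ENNReal.ofReal_tsum_of_nonneg (fun p => by positivity) hsum.1).symm
          _ ≤ ENNReal.ofReal (M * Real.sqrt SK * ‖φ‖) :=
              ENNReal.ofReal_le_ofReal hsum.2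

lemma main_integrable (A : Bidx → Set ℝ) (hAc : ∀ p, IsClosed (A p))
    (hAs : ∀ p : Bidx, A p ⊆ dyadicInterval p.1) (hApos : ∀ p, 0 < volume (A p))
    (hdisj : ∀ p q : Bidx, p ≠ q → Disjoint (A p) (A q))
    (e : Bidx → H2) (he : Orthonormal ℝ e) {c : Bidx → ℝ} {M : ℝ} (hM : 0 ≤ M)
    (hc : ∀ k, ∑ p ∈ lvl k, (c p)^2 ≤ M^2/((k:ℝ)+1)^2) (φ : H2 →L[ℝ] ℝ)
    {S : Set ℝ} (hS : MeasurableSet S) :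
    Integrable (fun t => φ (basicFun c A e t)) (volume.restrict S) := by
  have hmeas : Measurable (fun t => φ (basicFun c A e t)) := by
    have heq : (fun t => φ (basicFun c A e t)) = fun t => ∑' p, Set.indicator (A p)
        (fun _ => ((volume (A p)).toReal)⁻¹ * (c p * φ (e p))) t :=
      funext (phi_basicFun A e hdisj c φ)
    rw [heq]
    exact T_measurable A hAc hdisj _
  refine ⟨hmeas.aestronglyMeasurable, ?_⟩
  rw [HasFiniteIntegral]
  exact lt_of_le_of_lt (lint_phi_le A hAc hAs hApos hdisj e he hM hc φ hS)
    ENNReal.ofReal_lt_top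

lemma pettis_unique (x y : H2) (h : ∀ φ : H2 →L[ℝ] ℝ, φ x = φ y) : x = y := by
  have h1 := h (innerSL ℝ (x - y))
  simp only [innerSL_apply_apply] at h1
  have h2 : ⟪x - y, x - y⟫ = 0 := by
    rw [inner_sub_right, h1, sub_self]
  rw [inner_self_eq_zero] at h2
  exact sub_eq_zero.1 h2

lemma main_pettis (A : Bidx → Set ℝ) (hAc : ∀ p, IsClosed (A p))
    (hAs : ∀ p : Bidx, A p ⊆ dyadicInterval p.1) (hApos : ∀ p, 0 < volume (A p))
    (hdisj : ∀ p q : Bidx, p ≠ q → Disjoint (A p) (A q))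
    (e : Bidx → H2) (he : Orthonormal ℝ e) {c : Bidx → ℝ} {M : ℝ} (hM : 0 ≤ M)
    (hc : ∀ k, ∑ p ∈ lvl k, (c p)^2 ≤ M^2/((k:ℝ)+1)^2)
    (E : Set ℝ) (hE : MeasurableSet E) :
    ∃ v : H2, ‖v‖ ≤ M * Real.sqrt SK ∧
      ∀ φ : H2 →L[ℝ] ℝ,
        φ v = ∫ t in E, φ (basicFun c A e t) ∂(volume.restrict (Set.Icc 0 1)) := by
  set S := E ∩ Set.Icc (0:ℝ) 1 with hSdef
  have hS : MeasurableSet S := hE.inter measurableSet_Icc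
  have hrestrict : (volume.restrict (Set.Icc (0:ℝ) 1)).restrict E = volume.restrict S :=
    Measure.restrict_restrict hE
  set a : Bidx → ℝ :=
    fun p => c p * (((volume (A p)).toReal)⁻¹ * (volume (A p ∩ S)).toReal) with ha
  have ha_le : ∀ p, |a p| ≤ |c p| := by
    intro p
    rw [ha, abs_mul,
      abs_of_nonneg (frac_nonneg A p S)]
    calc |c p| * (((volume (A p)).toReal)⁻¹ * (volume (A p ∩ S)).toReal)
        ≤ |c p| * 1 := mul_le_mul_of_nonneg_left (frac_le_one A hAs hApos p S) (abs_nonneg _)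
      _ = |c p| := mul_one _
  have hcsq := csq_summable (M := M) hc
  have hasq : Summable (fun p => (a p)^2) := by
    refine Summable.of_nonneg_of_le (fun p => sq_nonneg _) (fun p => ?_) hcsq.1
    rw [← sq_abs (a p), ← sq_abs (c p)]
    exact pow_le_pow_left₀ (abs_nonneg _) (ha_le p) 2
  have hsumv : Summable (fun p => a p • e p) := by
    have h1 := (he.orthogonalFamily.summable_iff_norm_sq_summable (fun p => a p)).2 ?_
    · exact h1.congr (fun p => LinearIsometry.toSpanSingleton_apply (he.1 p) (a p))
    · refine hasq.congr (fun p => ?_)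
      rw [Real.norm_eq_abs, sq_abs]
  set v : H2 := ∑' p, a p • e p with hv
  have happly : ∀ (ψ : H2 →L[ℝ] ℝ), ψ v = ∑' p, a p * ψ (e p) := by
    intro ψ
    rw [hv, ψ.map_tsum hsumv]
    exact tsum_congr (fun p => by rw [_root_.map_smul]; rfl)
  have hinner : ∀ p₀, ⟪e p₀, v⟫ = a p₀ := by
    intro p₀
    have h1 := happly (innerSL ℝ (e p₀))
    simp only [innerSL_apply_apply] at h1
    rw [h1]
    refine tsum_eq_single p₀ (fun q hq => ?_) |>.trans ?_
    · rw [he.2 (Ne.symm hq), mul_zero]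
    · have hn : ⟪e p₀, e p₀⟫ = (1:ℝ) := by
        rw [real_inner_self_eq_norm_sq, he.1 p₀, one_pow]
      rw [hn, mul_one]
  have hsq_eq : ‖v‖^2 = ∑' p, a p * a p := by
    rw [← real_inner_self_eq_norm_sq]
    have h1 := happly (innerSL ℝ v)
    simp only [innerSL_apply_apply] at h1
    rw [h1]
    exact tsum_congr (fun p => by rw [real_inner_comm, hinner p])
  have hnormsq : ‖v‖^2 ≤ M^2 * SK := by
    rw [hsq_eq]
    have h1 : ∑' p, a p * a p ≤ ∑' p, (c p)^2 := by
      refine Summable.tsum_le_tsum (fun p => ?_) (by simpa [sq] using hasq) hcsq.1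
      have := pow_le_pow_left₀ (abs_nonneg _) (ha_le p) 2
      rw [sq_abs, sq_abs] at this
      calc a p * a p = (a p)^2 := (sq (a p)).symm
        _ ≤ (c p)^2 := this
    exact h1.trans hcsq.2
  have hnorm : ‖v‖ ≤ M * Real.sqrt SK := by
    have h1 := Real.sqrt_le_sqrt hnormsq
    rw [Real.sqrt_sq (norm_nonneg v)] at h1
    refine h1.trans (le_of_eq ?_)
    rw [Real.sqrt_mul (sq_nonneg M), Real.sqrt_sq hM]
  refine ⟨v, hnorm, fun φ => ?_⟩
  have heval : (fun t => φ (basicFun c A e t)) = fun t => ∑' p, Set.indicator (A p)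
      (fun _ => ((volume (A p)).toReal)⁻¹ * (c p * φ (e p))) t :=
    funext (phi_basicFun A e hdisj c φ)
  calc φ v = ∑' p, a p * φ (e p) := happly φ
    _ = ∑' p, ∫ t, Set.indicator (A p)
          (fun _ => ((volume (A p)).toReal)⁻¹ * (c p * φ (e p))) t ∂(volume.restrict S) := by
        refine tsum_congr (fun p => ?_)
        rw [integral_indicator_const _ (hAc p).measurableSet,
          measureReal_restrict_apply (hAc p).measurableSet, measureReal_def, smul_eq_mul, ha]
        ring
    _ = ∫ t, ∑' p, Set.indicator (A p)
          (fun _ => ((volume (A p)).toReal)⁻¹ * (c p * φ (e p))) t ∂(volume.restrict S) := by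
        refine (integral_tsum (fun p =>
          (measurable_const.indicator (hAc p).measurableSet).aestronglyMeasurable)
          ?_).symm
        have hle : ∑' p, ∫⁻ t, ‖Set.indicator (A p)
            (fun _ => ((volume (A p)).toReal)⁻¹ * (c p * φ (e p))) t‖₊ ∂(volume.restrict S)
            ≤ ENNReal.ofReal (M * Real.sqrt SK * ‖φ‖) := by
          refine (ENNReal.tsum_le_tsum (fun p => lint_T_le A hAc hAs hApos p _ hS)).trans ?_
          have hsum := phi_summable e he hM hc φ
          calc ∑' p, ENNReal.ofReal (|c p * φ (e p)|)
              = ∑' p, ENNReal.ofReal (|c p| * |φ (e p)|) :=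
                tsum_congr (fun p => by rw [abs_mul])
            _ = ENNReal.ofReal (∑' p, |c p| * |φ (e p)|) :=
                (ENNReal.ofReal_tsum_of_nonneg (fun p => by positivity) hsum.1).symm
            _ ≤ ENNReal.ofReal (M * Real.sqrt SK * ‖φ‖) :=
                ENNReal.ofReal_le_ofReal hsum.2
        exact ne_top_of_le_ne_top ENNReal.ofReal_ne_top hle
    _ = ∫ t in E, φ (basicFun c A e t) ∂(volume.restrict (Set.Icc 0 1)) := by
        rw [hrestrict, heval]

noncomputable def gam (k : ℕ) : ℝ := (((k:ℝ) + 1) * (2:ℝ) ^ ((k:ℝ) / 2))⁻¹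

lemma specialCoef_eq (n : ℕ → ℕ) (p : Bidx) :
    specialCoef n p = if (p.2 : ℕ) = n p.1.length then gam p.1.length else 0 := rfl

lemma gam_pos (k : ℕ) : 0 < gam k := by
  rw [gam]
  have h2 : (0:ℝ) < (2:ℝ) ^ ((k:ℝ) / 2) := Real.rpow_pos_of_pos (by norm_num) _
  positivity

lemma two_rpow_sq (k : ℕ) : ((2:ℝ) ^ ((k:ℝ) / 2))^2 = (2:ℝ)^(k:ℕ) := by
  rw [sq, ← Real.rpow_add (by norm_num : (0:ℝ) < 2)]
  rw [show (k:ℝ)/2 + (k:ℝ)/2 = (k:ℝ) by ring, Real.rpow_natCast]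

lemma gam_sq (k : ℕ) : (2:ℝ)^(k:ℕ) * (gam k)^2 = 1/((k:ℝ)+1)^2 := by
  have hb := two_rpow_sq k
  have h2pos : (0:ℝ) < 2 ^ (k:ℕ) := by positivity
  rw [gam, inv_pow, mul_pow, hb, mul_inv,
    show (2:ℝ)^(k:ℕ) * ((((k:ℝ)+1)^2)⁻¹ * ((2:ℝ)^(k:ℕ))⁻¹)
      = ((2:ℝ)^(k:ℕ) * ((2:ℝ)^(k:ℕ))⁻¹) * (((k:ℝ)+1)^2)⁻¹ from by ring,
    mul_inv_cancel₀ (ne_of_gt h2pos), one_mul, one_div]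

lemma fin_sum_ite {m n : ℕ} (h : n ≤ m) (x : ℝ) :
    ∑ j : Fin (m+1), (if (j:ℕ) = n then x else 0) = x := by
  have hb : (⟨n, Nat.lt_succ_of_le h⟩ : Fin (m+1)) ∈ (Finset.univ : Finset (Fin (m+1))) :=
    Finset.mem_univ _
  have hcong : ∀ j : Fin (m+1), (if (j:ℕ) = n then x else 0)
      = if j = ⟨n, Nat.lt_succ_of_le h⟩ then x else 0 := by
    intro j
    congr 1
    simp [Fin.ext_iff]
  rw [Finset.sum_congr rfl (fun j _ => hcong j), Finset.sum_ite_eq' _ _ _, if_pos hb]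

lemma sum_lvl_sigma (k : ℕ) (f : Bidx → ℝ) :
    ∑ p ∈ lvl k, f p = ∑ σ ∈ lvlL k, ∑ j : Fin (σ.length + 1), f ⟨σ, j⟩ :=
  Finset.sum_sigma _ _ _

lemma level_special (τ : List Bool) (n : ℕ → ℕ) (hn : ∀ k, n k ≤ k) (k : ℕ) :
    ∑ p ∈ lvl k, (if τ <+: p.1 then specialCoef n p else 0)^2 ≤ (1:ℝ)^2/((k:ℝ)+1)^2 := by
  have hterm : ∀ p ∈ lvl k, (if τ <+: p.1 then specialCoef n p else 0)^2
      ≤ (if (p.2:ℕ) = n k then (gam k)^2 else 0) := by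
    rintro ⟨σ, j⟩ hp
    have hk := mem_lvl.1 hp
    simp only at hk
    subst hk
    erw [specialCoef_eq]
    by_cases h1 : τ <+: σ <;> by_cases h2 : ((j:ℕ) = n σ.length)
    · rw [if_pos h1, if_pos h2, if_pos h2]
    · rw [if_pos h1, if_neg h2, if_neg h2]
      norm_num
    · rw [if_neg h1, if_pos h2]
      norm_num
      positivity
    · rw [if_neg h1, if_neg h2]
      norm_num
  calc ∑ p ∈ lvl k, (if τ <+: p.1 then specialCoef n p else 0)^2
      ≤ ∑ p ∈ lvl k, (if (p.2:ℕ) = n k then (gam k)^2 else 0) := Finset.sum_le_sum hterm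
    _ = ∑ σ ∈ lvlL k, (gam k)^2 := by
        rw [sum_lvl_sigma]
        refine Finset.sum_congr rfl (fun σ hσ => ?_)
        have hσk := mem_lvlL.1 hσ
        exact fin_sum_ite (le_trans (hn k) (le_of_eq hσk.symm)) _
    _ = (1:ℝ)^2/((k:ℝ)+1)^2 := by
        rw [Finset.sum_const, card_lvlL, nsmul_eq_mul, Nat.cast_pow, Nat.cast_ofNat, gam_sq]
        norm_num

section comb

variable (lam : ℕ → ℝ) (nf : ℕ → ℕ → ℕ)

noncomputable def dfun (k j : ℕ) : ℝ := ∑' i, if nf i k = j then lam i else 0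

noncomputable def Dfun (k j : ℕ) : ℝ := ∑' i, if nf i k = j then |lam i| else 0

lemma dfun_summable (hlam : Summable (fun i => |lam i|)) (k j : ℕ) :
    Summable (fun i => if nf i k = j then lam i else 0) := by
  have habs : Summable (fun i => |if nf i k = j then lam i else 0|) := by
    refine Summable.of_nonneg_of_le (fun i => abs_nonneg _) (fun i => ?_) hlam
    split
    · exact le_rfl
    · simp [abs_nonneg]
  exact habs.of_abs

lemma Dfun_summable (hlam : Summable (fun i => |lam i|)) (k j : ℕ) :
    Summable (fun i => if nf i k = j then |lam i| else 0) := by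
  refine Summable.of_nonneg_of_le (fun i => ?_) (fun i => ?_) hlam
  · split
    · exact abs_nonneg _
    · exact le_rfl
  · split
    · exact le_rfl
    · simp [abs_nonneg]

lemma Dfun_nonneg (k j : ℕ) : 0 ≤ Dfun lam nf k j :=
  tsum_nonneg (fun i => by split; exacts [abs_nonneg _, le_rfl])

lemma abs_dfun_le (hlam : Summable (fun i => |lam i|)) (k j : ℕ) :
    |dfun lam nf k j| ≤ Dfun lam nf k j := by
  rw [dfun, Dfun]
  have h := norm_tsum_le_tsum_norm (f := fun i => if nf i k = j then lam i else 0) ?_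
  · rw [Real.norm_eq_abs] at h
    refine h.trans (le_of_eq (tsum_congr (fun i => ?_)))
    rw [Real.norm_eq_abs]
    split <;> simp
  · refine (Dfun_summable lam nf hlam k j).congr (fun i => ?_)
    simp only [Real.norm_eq_abs]
    by_cases h : nf i k = j
    · rw [if_pos h, if_pos h]
    · rw [if_neg h, if_neg h, abs_zero]
end comb

section comb2

variable {lam : ℕ → ℝ} {nf : ℕ → ℕ → ℕ}

lemma sum_Dfun (hlam : Summable (fun i => |lam i|)) (hnf : ∀ i k, nf i k ≤ k) (k : ℕ) :
    ∑ j : Fin (k+1), Dfun lam nf k (j:ℕ) = ∑' i, |lam i| := by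
  unfold Dfun
  rw [← Summable.tsum_finsetSum (f := fun (j : Fin (k+1)) (i : ℕ) => if nf i k = (j:ℕ) then |lam i| else 0)
    (fun j _ => Dfun_summable lam nf hlam k (j:ℕ))]
  refine tsum_congr (fun i => ?_)
  have : ∀ j : Fin (k+1), (if nf i k = (j:ℕ) then |lam i| else 0)
      = (if (j:ℕ) = nf i k then |lam i| else 0) := by
    intro j
    congr 1
    simp [eq_comm]
  rw [Finset.sum_congr rfl (fun j _ => this j)]
  exact fin_sum_ite (hnf i k) _

lemma comb_fact (hlam : Summable (fun i => |lam i|)) (hnf : ∀ i k, nf i k ≤ k) (k : ℕ) :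
    ∑ j : Fin (k+1), (dfun lam nf k (j:ℕ))^2 ≤ (∑' i, |lam i|)^2 := by
  set L := ∑' i, |lam i| with hL
  have hDle : ∀ j : Fin (k+1), Dfun lam nf k (j:ℕ) ≤ L := by
    intro j
    rw [hL, ← sum_Dfun hlam hnf k]
    exact Finset.single_le_sum (fun j' _ => Dfun_nonneg lam nf k _) (Finset.mem_univ j)
  have h1 : ∀ j : Fin (k+1), (dfun lam nf k (j:ℕ))^2 ≤ Dfun lam nf k (j:ℕ) * L := by
    intro j
    have h2 := abs_dfun_le lam nf hlam k (j:ℕ)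
    calc (dfun lam nf k (j:ℕ))^2 = |dfun lam nf k (j:ℕ)| * |dfun lam nf k (j:ℕ)| := by
          rw [← abs_mul, abs_mul_self, sq]
      _ ≤ Dfun lam nf k (j:ℕ) * L :=
          mul_le_mul h2 (h2.trans (hDle j)) (abs_nonneg _) (Dfun_nonneg lam nf k _)
  calc ∑ j : Fin (k+1), (dfun lam nf k (j:ℕ))^2
      ≤ ∑ j : Fin (k+1), Dfun lam nf k (j:ℕ) * L := Finset.sum_le_sum (fun j _ => h1 j)
    _ = (∑ j : Fin (k+1), Dfun lam nf k (j:ℕ)) * L := by rw [← Finset.sum_mul]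
    _ = L * L := by rw [sum_Dfun hlam hnf k]
    _ = L^2 := (sq L).symm

/-- The combined coefficient function of `∑ᵢ λᵢ fᵢ` restricted to extensions of `τ`. -/
noncomputable def combCoef (lam : ℕ → ℝ) (nf : ℕ → ℕ → ℕ) (τ : List Bool) : Bidx → ℝ :=
  fun p => if τ <+: p.1 then gam p.1.length * dfun lam nf p.1.length (p.2:ℕ) else 0

lemma level_comb (hlam : Summable (fun i => |lam i|)) (hnf : ∀ i k, nf i k ≤ k)
    (τ : List Bool) (k : ℕ) :
    ∑ p ∈ lvl k, (combCoef lam nf τ p)^2 ≤ (∑' i, |lam i|)^2/((k:ℝ)+1)^2 := by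
  set L := ∑' i, |lam i| with hL
  have hL0 : 0 ≤ L := tsum_nonneg (fun i => abs_nonneg _)
  have hterm : ∀ p ∈ lvl k, (combCoef lam nf τ p)^2
      ≤ (gam k)^2 * (dfun lam nf k (p.2:ℕ))^2 := by
    rintro ⟨σ, j⟩ hp
    have hk := mem_lvl.1 hp
    simp only at hk
    subst hk
    unfold combCoef
    by_cases h1 : τ <+: σ
    · rw [if_pos h1, mul_pow]
    · rw [if_neg h1]
      norm_num
      positivity
  calc ∑ p ∈ lvl k, (combCoef lam nf τ p)^2
      ≤ ∑ p ∈ lvl k, (gam k)^2 * (dfun lam nf k (p.2:ℕ))^2 := Finset.sum_le_sum hterm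
    _ = ∑ σ ∈ lvlL k, ∑ j : Fin (σ.length+1), (gam k)^2 * (dfun lam nf k (j:ℕ))^2 :=
        sum_lvl_sigma k _
    _ ≤ ∑ σ ∈ lvlL k, (gam k)^2 * L^2 := by
        refine Finset.sum_le_sum (fun σ hσ => ?_)
        have hσk := mem_lvlL.1 hσ
        subst hσk
        rw [← Finset.mul_sum]
        exact mul_le_mul_of_nonneg_left (comb_fact hlam hnf σ.length) (sq_nonneg _)
    _ = L^2/((k:ℝ)+1)^2 := by
        rw [Finset.sum_const, card_lvlL, nsmul_eq_mul, Nat.cast_pow, Nat.cast_ofNat,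
          show ((2:ℝ)^k * ((gam k)^2 * L^2)) = ((2:ℝ)^k * (gam k)^2) * L^2 from by ring,
          gam_sq]
        ring

end comb2

section regroup2

variable {lam : ℕ → ℝ} {nf : ℕ → ℕ → ℕ}

lemma resCoef_abs_le (n : ℕ → ℕ) (τ : List Bool) (p : Bidx) :
    |if τ <+: p.1 then specialCoef n p else 0| ≤ gam p.1.length := by
  by_cases h : τ <+: p.1
  · rw [if_pos h, specialCoef_eq]
    by_cases h2 : (p.2:ℕ) = n p.1.length
    · rw [if_pos h2, abs_of_pos (gam_pos _)]
    · rw [if_neg h2, abs_zero]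
      exact (gam_pos _).le
  · rw [if_neg h, abs_zero]
    exact (gam_pos _).le

lemma lam_coef_summable (hlam : Summable (fun i => |lam i|)) (τ : List Bool) (p : Bidx) :
    Summable (fun i => lam i * (if τ <+: p.1 then specialCoef (nf i) p else 0)) := by
  refine Summable.of_abs ?_
  refine Summable.of_nonneg_of_le (fun i => abs_nonneg _) (fun i => ?_)
    (hlam.mul_right (gam p.1.length))
  rw [abs_mul]
  exact mul_le_mul_of_nonneg_left (resCoef_abs_le (nf i) τ p) (abs_nonneg _)

lemma tsum_lam_coef (hlam : Summable (fun i => |lam i|)) (τ : List Bool) (p : Bidx) :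
    ∑' i, lam i * (if τ <+: p.1 then specialCoef (nf i) p else 0) = combCoef lam nf τ p := by
  rw [combCoef]
  by_cases h : τ <+: p.1
  · simp only [if_pos h]
    have hterm : ∀ i, lam i * specialCoef (nf i) p
        = gam p.1.length * (if nf i p.1.length = (p.2:ℕ) then lam i else 0) := by
      intro i
      rw [specialCoef_eq]
      by_cases h2 : (p.2:ℕ) = nf i p.1.length
      · rw [if_pos h2, if_pos h2.symm]
        ring
      · rw [if_neg h2, if_neg (fun hh => h2 hh.symm)]
        ring
    rw [tsum_congr hterm, tsum_mul_left, dfun]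
  · simp only [if_neg h, mul_zero, tsum_zero]

lemma regroup (A : Bidx → Set ℝ) (hdisj : ∀ p q : Bidx, p ≠ q → Disjoint (A p) (A q))
    (e : Bidx → H2) (lam : ℕ → ℝ) (cc : ℕ → Bidx → ℝ)
    (hsum : ∀ p : Bidx, Summable (fun i => lam i * cc i p)) (t : ℝ) :
    ∑' i, lam i • basicFun (cc i) A e t
      = basicFun (fun p => ∑' i, lam i * cc i p) A e t := by
  rcases em (∃ p, t ∈ A p) with ⟨p₀, hp₀⟩ | h
  · have hval : ∀ i, lam i • basicFun (cc i) A e t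
        = (lam i * cc i p₀) • (((volume (A p₀)).toReal)⁻¹ • e p₀) := by
      intro i
      rw [basicFun_eval_mem A e hdisj _ hp₀, smul_smul, smul_smul, smul_smul]
      exact congrArg (· • e p₀) (by ring)
    rw [tsum_congr hval, Summable.tsum_smul_const (hsum p₀),
      basicFun_eval_mem A e hdisj _ hp₀, smul_smul, smul_smul]
    exact congrArg (· • e p₀) (by ring)
  · have hz : ∀ i, basicFun (cc i) A e t = 0 :=
      fun i => basicFun_eval_none A e _ (fun p ht => h ⟨p, ht⟩)
    rw [basicFun_eval_none A e _ (fun p ht => h ⟨p, ht⟩),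
      tsum_congr (fun i => by rw [hz i, smul_zero]), tsum_zero]

/-- Summability of the pointwise series of lam-weighted basic functions. -/
lemma lam_basic_summable_pt (A : Bidx → Set ℝ)
    (hdisj : ∀ p q : Bidx, p ≠ q → Disjoint (A p) (A q)) (e : Bidx → H2)
    (lam : ℕ → ℝ) (cc : ℕ → Bidx → ℝ)
    (hb : ∀ i p, |cc i p| ≤ gam p.1.length) (hlam : Summable (fun i => |lam i|)) (t : ℝ) :
    Summable (fun i => lam i • basicFun (cc i) A e t) := by
  rcases em (∃ p, t ∈ A p) with ⟨p₀, hp₀⟩ | h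
  · have hval : ∀ i, lam i • basicFun (cc i) A e t
        = (lam i * cc i p₀) • (((volume (A p₀)).toReal)⁻¹ • e p₀) := by
      intro i
      rw [basicFun_eval_mem A e hdisj _ hp₀, smul_smul, smul_smul, smul_smul]
      exact congrArg (· • e p₀) (by ring)
    rw [funext hval]
    refine Summable.smul_const ?_ _
    refine Summable.of_abs (Summable.of_nonneg_of_le (fun i => abs_nonneg _) (fun i => ?_)
      (hlam.mul_right (gam p₀.1.length)))
    rw [abs_mul]
    exact mul_le_mul_of_nonneg_left (hb i p₀) (abs_nonneg _)
  · have hz : ∀ i, basicFun (cc i) A e t = 0 :=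
      fun i => basicFun_eval_none A e _ (fun p ht => h ⟨p, ht⟩)
    rw [funext (fun i => by rw [hz i, smul_zero] : ∀ i, lam i • basicFun (cc i) A e t = 0)]
    exact summable_zero

end regroup2
/-- Lemma 3.3: for `{λᵢ} ∈ ℓ₁` and special basic functions `fᵢ = f(𝐧ᵢ)`, the function
`f = ∑ᵢ λᵢ fᵢ` is Pettis integrable, and for each `τ`,
`‖∫_{I_τ} f_{|τ}‖ ≤ ∑ᵢ |λᵢ| ‖∫_{I_τ} f_{i|τ}‖`. -/
theorem stmt9 (A : Bidx → Set ℝ) (hAc : ∀ p, IsClosed (A p))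
    (hAs : ∀ p : Bidx, A p ⊆ dyadicInterval p.1)
    (hApos : ∀ p, 0 < volume (A p))
    (hdisj : ∀ p q : Bidx, p ≠ q → Disjoint (A p) (A q))
    (e : Bidx → H2) (he : Orthonormal ℝ e)
    (nf : ℕ → ℕ → ℕ) (hnf : ∀ i k, nf i k ≤ k)
    (lam : ℕ → ℝ) (hlam : Summable (fun i => |lam i|)) :
    PettisIntegrable (fun t => ∑' i : ℕ, lam i • basicFun (specialCoef (nf i)) A e t)
      (volume.restrict (Set.Icc 0 1)) ∧
    ∀ (τ : List Bool) (v : H2) (w : ℕ → H2),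
      IsPettisIntegralOn (fun t => ∑' i : ℕ, lam i • basicFunRes τ (specialCoef (nf i)) A e t)
        (volume.restrict (Set.Icc 0 1)) (dyadicInterval τ) v →
      (∀ i, IsPettisIntegralOn (basicFunRes τ (specialCoef (nf i)) A e)
        (volume.restrict (Set.Icc 0 1)) (dyadicInterval τ) (w i)) →
      ‖v‖ ≤ ∑' i : ℕ, |lam i| * ‖w i‖ := by
  classical
  have hL0 : 0 ≤ ∑' i, |lam i| := tsum_nonneg (fun i => abs_nonneg _)
  have hnil : ∀ (n : ℕ → ℕ) (p : Bidx),
      (if [] <+: p.1 then specialCoef n p else 0) = specialCoef n p :=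
    fun n p => if_pos List.nil_prefix
  have hsumA : ∀ p : Bidx, Summable (fun i => lam i * specialCoef (nf i) p) := by
    intro p
    exact (lam_coef_summable (lam := lam) (nf := nf) hlam [] p).congr
      (fun i => by rw [hnil])
  have hFt : ∀ t, (∑' i, lam i • basicFun (specialCoef (nf i)) A e t)
      = basicFun (combCoef lam nf []) A e t := by
    intro t
    rw [regroup A hdisj e lam (fun i => specialCoef (nf i)) hsumA t]
    congr 1
    funext p
    rw [← tsum_lam_coef hlam [] p]
    exact tsum_congr (fun i => by rw [hnil])
  have hcb : ∀ τ : List Bool, ∀ k, ∑ p ∈ lvl k, (combCoef lam nf τ p)^2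
      ≤ (∑' i, |lam i|)^2/((k:ℝ)+1)^2 := fun τ k => level_comb hlam hnf τ k
  constructor
  · constructor
    · intro φ
      have h1 := main_integrable A hAc hAs hApos hdisj e he hL0 (hcb []) φ
        (measurableSet_Icc (a := (0:ℝ)) (b := 1))
      have heq : (fun t => φ (∑' i, lam i • basicFun (specialCoef (nf i)) A e t))
          = fun t => φ (basicFun (combCoef lam nf []) A e t) :=
        funext fun t => by rw [hFt t]
      rw [heq]
      exact h1
    · intro E hE
      obtain ⟨v, _, hrepr⟩ := main_pettis A hAc hAs hApos hdisj e he hL0 (hcb []) E hE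
      refine ⟨v, fun φ => ?_⟩
      rw [hrepr φ]
      simp only [← hFt]
  · intro τ v w hv hw
    simp only [basicFunRes] at hv hw
    set ci : ℕ → Bidx → ℝ := fun i p => if τ <+: p.1 then specialCoef (nf i) p else 0 with hci
    have hdm : MeasurableSet (dyadicInterval τ) := by
      show MeasurableSet (Set.Icc _ _)
      exact measurableSet_Icc
    have hS' : MeasurableSet (dyadicInterval τ ∩ Set.Icc (0:ℝ) 1) :=
      hdm.inter measurableSet_Icc
    have hrr : (volume.restrict (Set.Icc (0:ℝ) 1)).restrict (dyadicInterval τ)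
        = volume.restrict (dyadicInterval τ ∩ Set.Icc (0:ℝ) 1) :=
      Measure.restrict_restrict hdm
    have hWsk : ∀ i, ‖w i‖ ≤ Real.sqrt SK := by
      intro i
      obtain ⟨vi, hvinorm, hvirepr⟩ := main_pettis A hAc hAs hApos hdisj e he zero_le_one
        (level_special τ (nf i) (hnf i)) (dyadicInterval τ) hdm
      have hwi : w i = vi := by
        refine pettis_unique _ _ (fun φ => ?_)
        rw [hw i φ, hvirepr φ]
      rw [hwi]
      calc ‖vi‖ ≤ 1 * Real.sqrt SK := hvinorm
        _ = Real.sqrt SK := one_mul _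
    have hkey : ∀ φ : H2 →L[ℝ] ℝ, φ v = ∑' i, lam i * φ (w i) := by
      intro φ
      have hpt : ∀ t, φ (∑' i, lam i • basicFun (ci i) A e t)
          = ∑' i, lam i * φ (basicFun (ci i) A e t) := by
        intro t
        rw [φ.map_tsum (lam_basic_summable_pt A hdisj e lam ci
          (fun i p => resCoef_abs_le (nf i) τ p) hlam t)]
        exact tsum_congr (fun i => by rw [_root_.map_smul]; rfl)
      have hint : ∀ i, Integrable (fun t => φ (basicFun (ci i) A e t))
          (volume.restrict (dyadicInterval τ ∩ Set.Icc (0:ℝ) 1)) := fun i =>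
        main_integrable A hAc hAs hApos hdisj e he zero_le_one
          (level_special τ (nf i) (hnf i)) φ hS'
      have hlint : ∀ i, ∫⁻ t, ‖lam i * φ (basicFun (ci i) A e t)‖₊
          ∂(volume.restrict (dyadicInterval τ ∩ Set.Icc (0:ℝ) 1))
          ≤ ENNReal.ofReal |lam i| * ENNReal.ofReal (1 * Real.sqrt SK * ‖φ‖) := by
        intro i
        have hre : ∀ t, (‖lam i * φ (basicFun (ci i) A e t)‖₊ : ENNReal)
            = ENNReal.ofReal |lam i| * ‖φ (basicFun (ci i) A e t)‖₊ := by
          intro t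
          rw [nnnorm_mul, ENNReal.coe_mul, ← enorm_eq_nnnorm, Real.enorm_eq_ofReal_abs (lam i)]
        calc ∫⁻ t, ‖lam i * φ (basicFun (ci i) A e t)‖₊
              ∂(volume.restrict (dyadicInterval τ ∩ Set.Icc (0:ℝ) 1))
            = ∫⁻ t, ENNReal.ofReal |lam i| * ‖φ (basicFun (ci i) A e t)‖₊
              ∂(volume.restrict (dyadicInterval τ ∩ Set.Icc (0:ℝ) 1)) :=
              lintegral_congr (fun t => hre t)
          _ = ENNReal.ofReal |lam i| * ∫⁻ t, ‖φ (basicFun (ci i) A e t)‖₊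
              ∂(volume.restrict (dyadicInterval τ ∩ Set.Icc (0:ℝ) 1)) :=
              lintegral_const_mul' _ _ ENNReal.ofReal_ne_top
          _ ≤ ENNReal.ofReal |lam i| * ENNReal.ofReal (1 * Real.sqrt SK * ‖φ‖) :=
              mul_le_mul_right (lint_phi_le A hAc hAs hApos hdisj e he zero_le_one
                (level_special τ (nf i) (hnf i)) φ hS') _
      rw [hv φ, hrr]
      calc ∫ t, φ (∑' i, lam i • basicFun (ci i) A e t)
            ∂(volume.restrict (dyadicInterval τ ∩ Set.Icc (0:ℝ) 1))
          = ∫ t, ∑' i, lam i * φ (basicFun (ci i) A e t)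
            ∂(volume.restrict (dyadicInterval τ ∩ Set.Icc (0:ℝ) 1)) :=
            integral_congr_ae (Filter.Eventually.of_forall (fun t => hpt t))
        _ = ∑' i, ∫ t, lam i * φ (basicFun (ci i) A e t)
            ∂(volume.restrict (dyadicInterval τ ∩ Set.Icc (0:ℝ) 1)) := by
            refine integral_tsum
              (fun i => ((hint i).aestronglyMeasurable.const_mul (lam i))) ?_
            refine ne_top_of_le_ne_top (b := ENNReal.ofReal (∑' i, |lam i|)
              * ENNReal.ofReal (1 * Real.sqrt SK * ‖φ‖)) ?_ ?_
            · exact ENNReal.mul_ne_top ENNReal.ofReal_ne_top ENNReal.ofReal_ne_top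
            · calc ∑' i, ∫⁻ t, ‖lam i * φ (basicFun (ci i) A e t)‖₊
                  ∂(volume.restrict (dyadicInterval τ ∩ Set.Icc (0:ℝ) 1))
                  ≤ ∑' i, ENNReal.ofReal |lam i| * ENNReal.ofReal (1 * Real.sqrt SK * ‖φ‖) :=
                    ENNReal.tsum_le_tsum (fun i => hlint i)
                _ = (∑' i, ENNReal.ofReal |lam i|) * ENNReal.ofReal (1 * Real.sqrt SK * ‖φ‖) :=
                    ENNReal.tsum_mul_right
                _ = ENNReal.ofReal (∑' i, |lam i|) * ENNReal.ofReal (1 * Real.sqrt SK * ‖φ‖) := by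
                    rw [ENNReal.ofReal_tsum_of_nonneg (fun i => abs_nonneg _) hlam]
        _ = ∑' i, lam i * φ (w i) := by
            refine tsum_congr (fun i => ?_)
            rw [integral_const_mul, hw i φ, hrr]
    have hsummand : Summable (fun i => |lam i| * ‖w i‖) :=
      Summable.of_nonneg_of_le (fun i => mul_nonneg (abs_nonneg _) (norm_nonneg _))
        (fun i => mul_le_mul_of_nonneg_left (hWsk i) (abs_nonneg _))
        (hlam.mul_right (Real.sqrt SK))
    by_cases hv0 : v = 0
    · rw [hv0, norm_zero]
      exact tsum_nonneg (fun i => mul_nonneg (abs_nonneg _) (norm_nonneg _))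
    · have hvpos : 0 < ‖v‖ := norm_pos_iff.2 hv0
      have hsum1 : Summable (fun i => lam i * ⟪v, w i⟫) := by
        refine Summable.of_abs (Summable.of_nonneg_of_le (fun i => abs_nonneg _) (fun i => ?_)
          (hsummand.mul_right ‖v‖))
        rw [abs_mul]
        calc |lam i| * |⟪v, w i⟫|
            ≤ |lam i| * (‖v‖ * ‖w i‖) :=
              mul_le_mul_of_nonneg_left (abs_real_inner_le_norm v (w i)) (abs_nonneg _)
          _ = |lam i| * ‖w i‖ * ‖v‖ := by ring
      have h2 : ‖v‖^2 = ∑' i, lam i * ⟪v, w i⟫ := by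
        have h3 := hkey (innerSL ℝ v)
        simp only [innerSL_apply_apply] at h3
        rw [← real_inner_self_eq_norm_sq, h3]
      have h4 : ‖v‖^2 ≤ (∑' i, |lam i| * ‖w i‖) * ‖v‖ := by
        rw [h2, ← tsum_mul_right]
        refine Summable.tsum_le_tsum (fun i => ?_) hsum1 (hsummand.mul_right ‖v‖)
        calc lam i * ⟪v, w i⟫ ≤ |lam i * ⟪v, w i⟫| := le_abs_self _
          _ = |lam i| * |⟪v, w i⟫| := abs_mul _ _
          _ ≤ |lam i| * (‖v‖ * ‖w i‖) :=
              mul_le_mul_of_nonneg_left (abs_real_inner_le_norm v (w i)) (abs_nonneg _)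
          _ = |lam i| * ‖w i‖ * ‖v‖ := by ring
      rw [sq] at h4
      exact le_of_mul_le_mul_right h4 hvpos
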